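/- arXiv:2202.12022 — 7 statements merged into one kernel-verified Lean document; each statement's English description precedes it below -/
import Mathlib

section
/- Let λ be a strict partition and T a standard Young composition tableau of shape λ (filling of the left-justified diagram D(λ)). Then the entries of T increase from bottom to top in every column of T. -/
/-- A composition: a list of positive integers. -/
def IsComposition (α : List ℕ) : Prop := ∀ x ∈ α, 0 < x

/-- A peak composition: all parts except possibly the last exceed 1. -/
def IsPeakComposition (α : List ℕ) : Prop :=
  IsComposition α ∧ ∀ i, i + 1 < α.length → 1 < α.getD i 0

/-- A strict partition: a strictly decreasing list of positive integers. -/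
def IsStrictPartition (l : List ℕ) : Prop :=
  (∀ x ∈ l, 0 < x) ∧ l.Chain' (· > ·)

/-- Box b = (column, row) (both indexed from 1) belongs to the left-justified diagram
of the composition α (row i has α_i boxes; rows numbered from bottom). -/
def InCompDiag (α : List ℕ) (b : ℕ × ℕ) : Prop :=
  1 ≤ b.2 ∧ b.2 ≤ α.length ∧ 1 ≤ b.1 ∧ b.1 ≤ α.getD (b.2 - 1) 0

/-- Box b = (column, row) belongs to the shifted diagram of l: row i is shifted i-1
units rightwards. -/
def InShiftedDiag (l : List ℕ) (b : ℕ × ℕ) : Prop :=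
  1 ≤ b.2 ∧ b.2 ≤ l.length ∧ b.2 ≤ b.1 ∧ b.1 < b.2 + l.getD (b.2 - 1) 0

/-- A standard filling of the diagram D with n boxes: a bijective assignment of
1, ..., n to the boxes of D. -/
def IsStdFilling (D : ℕ × ℕ → Prop) (n : ℕ) (T : ℕ × ℕ → ℕ) : Prop :=
  (∀ b, D b → 1 ≤ T b ∧ T b ≤ n) ∧
  (∀ k, 1 ≤ k → k ≤ n → ∃ b, D b ∧ T b = k) ∧
  (∀ b b', D b → D b' → T b = T b' → b = b')

/-- A standard Young composition tableau of shape α: rows increase left to right,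
the first column increases bottom to top, and the triple condition (SYCT3) holds. -/
def IsSYCT (α : List ℕ) (n : ℕ) (T : ℕ × ℕ → ℕ) : Prop :=
  IsStdFilling (InCompDiag α) n T ∧
  (∀ c c' r, c < c' → InCompDiag α (c, r) → InCompDiag α (c', r) → T (c, r) < T (c', r)) ∧
  (∀ r r', r < r' → InCompDiag α (1, r) → InCompDiag α (1, r') → T (1, r) < T (1, r')) ∧
  (∀ c r r', r' < r → InCompDiag α (c, r) → InCompDiag α (c + 1, r') →
      T (c, r) < T (c + 1, r') →
      InCompDiag α (c + 1, r) ∧ T (c + 1, r) < T (c + 1, r'))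

/-- For every 1 ≤ k ≤ n, the boxes of the diagram of α with entries at most k form the
diagram of a peak composition. -/
def PrefixesArePeak (α : List ℕ) (n : ℕ) (T : ℕ × ℕ → ℕ) : Prop :=
  ∀ k, 1 ≤ k → k ≤ n → ∃ β : List ℕ, IsPeakComposition β ∧
    ∀ b, (InCompDiag α b ∧ T b ≤ k) ↔ InCompDiag β b

/-- A standard peak Young composition tableau. -/
def IsSPYCT (α : List ℕ) (n : ℕ) (T : ℕ × ℕ → ℕ) : Prop :=
  IsSYCT α n T ∧ PrefixesArePeak α n T

/-- A standard peak composition tableau (SPCT1, SPCT2, SPCT3). -/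
def IsSPCT (α : List ℕ) (n : ℕ) (T : ℕ × ℕ → ℕ) : Prop :=
  IsStdFilling (InCompDiag α) n T ∧
  (∀ c c' r, c < c' → InCompDiag α (c, r) → InCompDiag α (c', r) → T (c, r) < T (c', r)) ∧
  (∀ r r', r < r' → InCompDiag α (1, r) → InCompDiag α (1, r') → T (1, r) < T (1, r')) ∧
  PrefixesArePeak α n T

/-- A standard shifted tableau: rows increase left to right and columns increase
bottom to top. -/
def IsSShT (l : List ℕ) (n : ℕ) (T : ℕ × ℕ → ℕ) : Prop :=
  IsStdFilling (InShiftedDiag l) n T ∧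
  (∀ c c' r, c < c' → InShiftedDiag l (c, r) → InShiftedDiag l (c', r) →
      T (c, r) < T (c', r)) ∧
  (∀ c r r', r < r' → InShiftedDiag l (c, r) → InShiftedDiag l (c, r') →
      T (c, r) < T (c, r'))

/-- Rectification: shift each box of row r by r-1 units leftwards. -/
def rect (S : ℕ × ℕ → ℕ) : ℕ × ℕ → ℕ := fun b => S (b.1 + b.2 - 1, b.2)

/-- The filling obtained by exchanging the entries i and i+1. -/
def swapFill (T : ℕ × ℕ → ℕ) (i : ℕ) : ℕ × ℕ → ℕ :=
  fun b => if T b = i then i + 1 else if T b = i + 1 then i else T b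

/-- i is a descent of a filling of the diagram of α (for the Young composition tableau
convention): i+1 lies in a column weakly left of the column of i. -/
def IsDes (α : List ℕ) (T : ℕ × ℕ → ℕ) (i : ℕ) : Prop :=
  ∃ b b', InCompDiag α b ∧ InCompDiag α b' ∧ T b = i ∧ T b' = i + 1 ∧ b'.1 ≤ b.1

lemma inCompDiag_mk {l : List ℕ} {c r : ℕ} :
    InCompDiag l (c, r) ↔ (1 ≤ r ∧ r ≤ l.length ∧ 1 ≤ c ∧ c ≤ l.getD (r-1) 0) :=
  Iff.rfl

lemma strict_getD_lt {l : List ℕ} (hl : IsStrictPartition l) {i j : ℕ}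
    (hij : i < j) (hj : j < l.length) : l.getD j 0 < l.getD i 0 := by
  have hp : l.Pairwise (· > ·) := List.isChain_iff_pairwise.mp hl.2
  have := List.pairwise_iff_getElem.mp hp i j (hij.trans hj) hj hij
  rw [List.getD_eq_getElem l 0 hj, List.getD_eq_getElem l 0 (hij.trans hj)]
  exact this

lemma strict_getD_le {l : List ℕ} (hl : IsStrictPartition l) {i j : ℕ}
    (hij : i ≤ j) (hj : j < l.length) : l.getD j 0 ≤ l.getD i 0 := by
  rcases eq_or_lt_of_le hij with h | h
  · subst h; rfl
  · exact le_of_lt (strict_getD_lt hl h hj)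

/-- Monotonicity of the diagram of a strict partition: rows get shorter upward. -/
lemma diag_mono {l : List ℕ} (hl : IsStrictPartition l) {c r r' : ℕ}
    (h1 : 1 ≤ r) (hrr : r ≤ r') (h : InCompDiag l (c, r')) : InCompDiag l (c, r) := by
  obtain ⟨ha, hb, hc, hd⟩ := h
  refine ⟨h1, le_trans hrr hb, hc, le_trans hd ?_⟩
  exact strict_getD_le hl (by omega) (by omega)

/-- For a strict partition shape, the entries of a standard Young composition tableau
increase from bottom to top in every column. -/
theorem syct_columns_increase (n : ℕ) (l : List ℕ) (hl : IsStrictPartition l)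
    (T : ℕ × ℕ → ℕ) (hT : IsSYCT l n T) :
    ∀ c r r', r < r' → InCompDiag l (c, r) → InCompDiag l (c, r') →
      T (c, r) < T (c, r') := by
  obtain ⟨hfill, hrow, hcol1, htriple⟩ := hT
  -- key growth lemma: a violation propagates along row r+1 forever
  have grow : ∀ t c r, InCompDiag l (c, r+1) → InCompDiag l (c+1, r) →
      T (c, r+1) < T (c+1, r) →
      InCompDiag l (c+1+t, r+1) ∧ T (c+1+t, r+1) < T (c+1+t, r) := by
    intro t
    induction t with
    | zero =>
      intro c r h1 h2 h3
      exact htriple c (r+1) r (by omega) h1 h2 h3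
    | succ t ih =>
      intro c r h1 h2 h3
      obtain ⟨hd, hlt⟩ := ih c r h1 h2 h3
      have hr1 : 1 ≤ r := h2.1
      have hrlen : r + 1 ≤ l.length := hd.2.1
      have hrow_r : l.getD r 0 < l.getD (r-1) 0 :=
        strict_getD_lt hl (by omega) (by omega)
      have hcle : c + 1 + t ≤ l.getD r 0 := by
        have := (inCompDiag_mk.mp hd).2.2.2; simpa using this
      have hD2 : InCompDiag l (c+2+t, r) := inCompDiag_mk.mpr ⟨hr1, by omega, by omega, by omega⟩
      have hD1 : InCompDiag l (c+1+t, r) := inCompDiag_mk.mpr ⟨hr1, by omega, by omega, by omega⟩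
      have hrowlt : T (c+1+t, r) < T (c+2+t, r) := hrow _ _ r (by omega) hD1 hD2
      have h3' : T (c+1+t, r+1) < T ((c+1+t)+1, r) := by
        have : (c+1+t)+1 = c+2+t := by omega
        rw [this]; exact lt_trans hlt hrowlt
      have := htriple (c+1+t) (r+1) r (by omega) hd (by
        have : (c+1+t)+1 = c+2+t := by omega
        rw [this]; exact hD2) h3'
      constructor
      · have e : c+1+(t+1) = (c+1+t)+1 := by omega
        rw [e]; exact this.1
      · have e : c+1+(t+1) = c+2+t := by omega
        have e2 : (c+1+t)+1 = c+2+t := by omega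
        rw [e]; rw [e2] at this; exact this.2
  -- Q: diagonal inequality
  have Q : ∀ c r, InCompDiag l (c, r+1) → InCompDiag l (c+1, r) →
      T (c+1, r) < T (c, r+1) := by
    intro c r h1 h2
    rcases lt_trichotomy (T (c+1, r)) (T (c, r+1)) with h | h | h
    · exact h
    · exfalso
      have := hfill.2.2 _ _ h2 h1 h
      simp at this
    · exfalso
      obtain ⟨hg, _⟩ := grow (l.getD r 0) c r h1 h2 h
      have := (inCompDiag_mk.mp hg).2.2.2
      simp only [Nat.add_sub_cancel] at this
      have hc1 : 1 ≤ c := h1.2.2.1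
      omega
  -- adjacent rows in a column
  have adj : ∀ c r, InCompDiag l (c, r) → InCompDiag l (c, r+1) →
      T (c, r) < T (c, r+1) := by
    intro c r h1 h2
    rcases Nat.lt_or_ge c 2 with hc | hc
    · have hc1 : c = 1 := by have := h1.2.2.1; omega
      subst hc1
      exact hcol1 r (r+1) (by omega) h1 h2
    · obtain ⟨c', rfl⟩ : ∃ c', c = c' + 1 := ⟨c - 1, by omega⟩
      have h1' : InCompDiag l (c', r+1) := by
        have := (inCompDiag_mk.mp h2).2.2.2
        exact inCompDiag_mk.mpr ⟨h2.1, h2.2.1, by omega, by omega⟩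
      have := Q c' r h1' h1
      exact lt_trans this (hrow c' (c'+1) (r+1) (by omega) h1' h2)
  -- general
  have gen : ∀ d c r, InCompDiag l (c, r) → InCompDiag l (c, r+d+1) →
      T (c, r) < T (c, r+d+1) := by
    intro d
    induction d with
    | zero => intro c r h1 h2; exact adj c r h1 h2
    | succ d ih =>
      intro c r h1 h2
      have hmid : InCompDiag l (c, r+d+1) := diag_mono hl (by omega) (by omega) h2
      have e : r + (d+1) + 1 = (r+d+1) + 1 := by omega
      rw [e] at h2 ⊢
      exact lt_trans (ih c r h1 hmid) (adj c (r+d+1) hmid h2)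
  intro c r r' hlt h1 h2
  obtain ⟨d, rfl⟩ : ∃ d, r' = r + d + 1 := ⟨r' - r - 1, by omega⟩
  exact gen d c r h1 h2
end

section
/- Let λ be a strict partition of n. The map rect, which shifts every box of row i of a shifted diagram by i-1 units leftwards (carrying entries), is a bijection from standard shifted tableaux of shape λ to standard peak Young composition tableaux of shape λ. -/
section RectAux

variable {l : List ℕ}

lemma sp_pos (hl : IsStrictPartition l) {i : ℕ} (h : i < l.length) : 1 ≤ l.getD i 0 := by
  have h1 : l.getD i 0 = l[i] := List.getD_eq_getElem l 0 h
  rw [h1]; exact hl.1 _ (List.getElem_mem h)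

lemma sp_step (hl : IsStrictPartition l) : ∀ d i, i + d < l.length → l.getD (i + d) 0 + d ≤ l.getD i 0 := by
  intro d
  induction d with
  | zero => intro i h; simp
  | succ d ih =>
    intro i h
    have hc : l.getD (i + 1) 0 < l.getD i 0 := by
      have h2 := List.isChain_iff_getElem.mp hl.2 i (by omega)
      rwa [← List.getD_eq_getElem l 0 (show i < l.length by omega),
        ← List.getD_eq_getElem l 0 (show i + 1 < l.length by omega)] at h2
    have h3 := ih (i + 1) (by omega)
    have e : i + 1 + d = i + (d + 1) := by omega
    rw [e] at h3
    omega

lemma sp_le (hl : IsStrictPartition l) {i j : ℕ} (hij : i ≤ j) (hj : j < l.length) :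
    l.getD j 0 + (j - i) ≤ l.getD i 0 := by
  obtain ⟨d, rfl⟩ : ∃ d, j = i + d := ⟨j - i, by omega⟩
  have := sp_step hl d i hj
  omega

lemma mk_comp {c r : ℕ} (h1 : 1 ≤ c) (h2 : c ≤ l.getD (r - 1) 0) (h3 : 1 ≤ r)
    (h4 : r ≤ l.length) : InCompDiag l (c, r) := ⟨h3, h4, h1, h2⟩

lemma mk_shift {c r : ℕ} (h1 : 1 ≤ r) (h2 : r ≤ l.length) (h3 : r ≤ c)
    (h4 : c < r + l.getD (r - 1) 0) : InShiftedDiag l (c, r) := ⟨h1, h2, h3, h4⟩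

lemma comp_elim {c r : ℕ} (h : InCompDiag l (c, r)) :
    1 ≤ r ∧ r ≤ l.length ∧ 1 ≤ c ∧ c ≤ l.getD (r - 1) 0 := h

lemma shift_elim {c r : ℕ} (h : InShiftedDiag l (c, r)) :
    1 ≤ r ∧ r ≤ l.length ∧ r ≤ c ∧ c < r + l.getD (r - 1) 0 := h

lemma mem_shift_of_comp {c r : ℕ} (h : InCompDiag l (c, r)) :
    InShiftedDiag l (c + r - 1, r) := by
  have h' := comp_elim h
  exact mk_shift (by omega) (by omega) (by omega) (by omega)

lemma mem_comp_of_shift {c r : ℕ} (h : InShiftedDiag l (c, r)) :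
    InCompDiag l (c - r + 1, r) := by
  have h' := shift_elim h
  exact mk_comp (by omega) (by omega) (by omega) (by omega)

lemma shift_down (hl : IsStrictPartition l) {c r r' : ℕ} (h : InShiftedDiag l (c, r'))
    (h1 : 1 ≤ r) (h2 : r ≤ r') : InShiftedDiag l (c, r) := by
  have h' := shift_elim h
  have hs := sp_le hl (show r - 1 ≤ r' - 1 by omega) (show r' - 1 < l.length by omega)
  exact mk_shift h1 (by omega) (by omega) (by omega)

/-- The diagonal condition for an SYCT of strict-partition shape, derived from the
triple condition. -/
lemma diag_of_SYCT {n : ℕ} {T : ℕ × ℕ → ℕ} (hl : IsStrictPartition l) (hT : IsSYCT l n T) :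
    ∀ c r, InCompDiag l (c + 1, r) → InCompDiag l (c, r + 1) → T (c + 1, r) < T (c, r + 1) := by
  obtain ⟨⟨hbound, hsurj, hinj⟩, hrow, hcol1, htriple⟩ := hT
  intro c r h1 h2
  by_contra hcon
  push_neg at hcon
  have hne : T (c + 1, r) ≠ T (c, r + 1) := by
    intro he
    have := hinj _ _ h1 h2 he
    rw [Prod.mk.injEq] at this
    omega
  have hlt : T (c, r + 1) < T (c + 1, r) := by omega
  have h1' := comp_elim h1
  have h2' := comp_elim h2
  simp only [Nat.add_sub_cancel] at h2'
  have key : ∀ j, InCompDiag l (c + j, r + 1) ∧ T (c + j, r + 1) < T (c + j + 1, r) := by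
    intro j
    induction j with
    | zero => exact ⟨h2, hlt⟩
    | succ j ih =>
      show InCompDiag l (c + j + 1, r + 1) ∧ T (c + j + 1, r + 1) < T (c + j + 1 + 1, r)
      obtain ⟨hmem, hltj⟩ := ih
      have hmem' := comp_elim hmem
      simp only [Nat.add_sub_cancel] at hmem'
      have hs := sp_le hl (show r - 1 ≤ r by omega) (show r < l.length by omega)
      have hmr : InCompDiag l (c + j + 1, r) := mk_comp (by omega) (by omega) (by omega) (by omega)
      obtain ⟨hmem2, hlt2⟩ := htriple (c + j) (r + 1) r (by omega) hmem hmr hltj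
      have hmem2' := comp_elim hmem2
      simp only [Nat.add_sub_cancel] at hmem2'
      have hmrr : InCompDiag l (c + j + 1 + 1, r) := mk_comp (by omega) (by omega) (by omega) (by omega)
      have hlt3 : T (c + j + 1, r) < T (c + j + 1 + 1, r) := hrow _ _ _ (by omega) hmr hmrr
      exact ⟨hmem2, lt_trans hlt2 hlt3⟩
  have hfin := comp_elim (key (l.getD r 0 + 1)).1
  simp only [Nat.add_sub_cancel] at hfin
  omega

lemma part3 {n : ℕ} {T : ℕ × ℕ → ℕ} (hl : IsStrictPartition l) (hT : IsSPYCT l n T) :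
    ∃ S, IsSShT l n S ∧ ∀ b, InCompDiag l b → rect S b = T b := by
  obtain ⟨hTy, hpeak⟩ := hT
  have hdiag := diag_of_SYCT hl hTy
  obtain ⟨⟨hbound, hsurj, hinj⟩, hrow, hcol1, htriple⟩ := hTy
  have hconsec : ∀ c r, InShiftedDiag l (c, r) → InShiftedDiag l (c, r + 1) →
      T (c - r + 1, r) < T (c - (r + 1) + 1, r + 1) := by
    intro c r h h'
    have h1 := shift_elim h
    have h2 := shift_elim h'
    have m1 := mem_comp_of_shift h
    have m2 := mem_comp_of_shift h'
    have e1 : c - r + 1 = (c - (r + 1) + 1) + 1 := by omega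
    rw [e1] at m1 ⊢
    exact hdiag _ _ m1 m2
  have haux : ∀ d c r, InShiftedDiag l (c, r) → InShiftedDiag l (c, r + d + 1) →
      T (c - r + 1, r) < T (c - (r + d + 1) + 1, r + d + 1) := by
    intro d
    induction d with
    | zero => intro c r h h'; exact hconsec c r h h'
    | succ d ih =>
      intro c r h h'
      have hr1 := shift_elim h
      have hmid : InShiftedDiag l (c, r + d + 1) := shift_down hl h' (by omega) (by omega)
      exact lt_trans (ih c r h hmid) (hconsec c (r + d + 1) hmid h')
  refine ⟨fun b => T (b.1 - b.2 + 1, b.2), ⟨⟨?_, ?_, ?_⟩, ?_, ?_⟩, ?_⟩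
  · rintro ⟨c, r⟩ h
    exact hbound _ (mem_comp_of_shift h)
  · intro k h1 h2
    obtain ⟨⟨c, r⟩, hb, hTb⟩ := hsurj k h1 h2
    refine ⟨(c + r - 1, r), mem_shift_of_comp hb, ?_⟩
    have hb' := comp_elim hb
    show T (c + r - 1 - r + 1, r) = k
    rw [show c + r - 1 - r + 1 = c by omega]
    exact hTb
  · rintro ⟨c, r⟩ ⟨c', r'⟩ h h' he
    have := hinj _ _ (mem_comp_of_shift h) (mem_comp_of_shift h') he
    have h1 := shift_elim h
    have h2 := shift_elim h'
    rw [Prod.mk.injEq] at this ⊢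
    omega
  · intro c c' r hcc h h'
    have h1 := shift_elim h
    show T (c - r + 1, r) < T (c' - r + 1, r)
    exact hrow _ _ _ (by omega) (mem_comp_of_shift h) (mem_comp_of_shift h')
  · intro c r r' hrr h h'
    show T (c - r + 1, r) < T (c - r' + 1, r')
    obtain ⟨d, rfl⟩ : ∃ d, r' = r + d + 1 := ⟨r' - r - 1, by omega⟩
    exact haux d c r h h'
  · rintro ⟨c, r⟩ hb
    have hb' := comp_elim hb
    show T (c + r - 1 - r + 1, r) = T (c, r)
    rw [show c + r - 1 - r + 1 = c by omega]

lemma part1 {n : ℕ} {S : ℕ × ℕ → ℕ} (hl : IsStrictPartition l) (hS : IsSShT l n S) :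
    IsSPYCT l n (rect S) := by
  obtain ⟨⟨hbound, hsurj, hinj⟩, hrow, hcol⟩ := hS
  have hstd : IsStdFilling (InCompDiag l) n (rect S) := by
    refine ⟨?_, ?_, ?_⟩
    · rintro ⟨c, r⟩ h
      exact hbound _ (mem_shift_of_comp h)
    · intro k h1 h2
      obtain ⟨⟨c, r⟩, hb, hTb⟩ := hsurj k h1 h2
      refine ⟨(c - r + 1, r), mem_comp_of_shift hb, ?_⟩
      have hb' := shift_elim hb
      show S (c - r + 1 + r - 1, r) = k
      rw [show c - r + 1 + r - 1 = c by omega]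
      exact hTb
    · rintro ⟨c, r⟩ ⟨c', r'⟩ h h' he
      have := hinj _ _ (mem_shift_of_comp h) (mem_shift_of_comp h') he
      have h1 := comp_elim h
      have h2 := comp_elim h'
      rw [Prod.mk.injEq] at this ⊢
      omega
  have hTrow : ∀ c c' r, c < c' → InCompDiag l (c, r) → InCompDiag l (c', r) →
      rect S (c, r) < rect S (c', r) := by
    intro c c' r hcc h h'
    have h1 := comp_elim h
    show S (c + r - 1, r) < S (c' + r - 1, r)
    exact hrow _ _ _ (by omega) (mem_shift_of_comp h) (mem_shift_of_comp h')
  have hTrowle : ∀ c c' r, 1 ≤ c → c ≤ c' → InCompDiag l (c', r) →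
      rect S (c, r) ≤ rect S (c', r) := by
    intro c c' r h1 hcc h'
    rcases Nat.lt_or_ge c c' with h | h
    · have h2 := comp_elim h'
      exact le_of_lt (hTrow c c' r h (mk_comp h1 (by omega) (by omega) (by omega)) h')
    · rw [show c = c' by omega]
  have hTdiag : ∀ c r, InCompDiag l (c + 1, r) → InCompDiag l (c, r + 1) →
      rect S (c + 1, r) < rect S (c, r + 1) := by
    intro c r h1 h2
    have m1 := mem_shift_of_comp h1
    have m2 := mem_shift_of_comp h2
    have e1 : c + 1 + r - 1 = c + r := by omega
    have e2 : c + (r + 1) - 1 = c + r := by omega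
    rw [e1] at m1
    rw [e2] at m2
    show S (c + 1 + r - 1, r) < S (c + (r + 1) - 1, r + 1)
    rw [e1, e2]
    exact hcol (c + r) r (r + 1) (by omega) m1 m2
  have hTcol1 : ∀ r r', r < r' → InCompDiag l (1, r) → InCompDiag l (1, r') →
      rect S (1, r) < rect S (1, r') := by
    intro r r' hrr h h'
    have m1 := mem_shift_of_comp h
    have m2 := mem_shift_of_comp h'
    have e1 : 1 + r - 1 = r := by omega
    have e2 : 1 + r' - 1 = r' := by omega
    rw [e1] at m1
    rw [e2] at m2
    have s1 := shift_elim m1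
    have s2 := shift_elim m2
    have hs := sp_le hl (show r - 1 ≤ r' - 1 by omega) (show r' - 1 < l.length by omega)
    have m3 : InShiftedDiag l (r', r) := mk_shift (by omega) (by omega) (by omega) (by omega)
    show S (1 + r - 1, r) < S (1 + r' - 1, r')
    rw [e1, e2]
    exact lt_trans (hrow r r' r hrr m1 m3) (hcol r' r r' hrr m3 m2)
  have hTtriple : ∀ c r r', r' < r → InCompDiag l (c, r) → InCompDiag l (c + 1, r') →
      rect S (c, r) < rect S (c + 1, r') →
      InCompDiag l (c + 1, r) ∧ rect S (c + 1, r) < rect S (c + 1, r') := by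
    intro c r r' hlt h h' hT
    exfalso
    have hh := comp_elim h
    have hh' := comp_elim h'
    have m1 := mem_shift_of_comp h
    have m2' := mem_shift_of_comp h'
    have e2 : c + 1 + r' - 1 = c + r' := by omega
    rw [e2] at m2'
    have m3 : InShiftedDiag l (c + r - 1, r') := shift_down hl m1 (by omega) (by omega)
    have le1 : S (c + r', r') ≤ S (c + r - 1, r') := by
      rcases Nat.lt_or_ge (c + r') (c + r - 1) with hx | hx
      · exact le_of_lt (hrow _ _ _ hx m2' m3)
      · rw [show c + r' = c + r - 1 by omega]
    have lt2 : S (c + r - 1, r') < S (c + r - 1, r) := hcol _ _ _ hlt m3 m1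
    have hT' : S (c + r - 1, r) < S (c + 1 + r' - 1, r') := hT
    rw [e2] at hT'
    omega
  refine ⟨⟨hstd, hTrow, hTcol1, hTtriple⟩, ?_⟩
  intro k hk1 hkn
  classical
  set g : ℕ → ℕ := fun r => Nat.findGreatest (fun c => rect S (c, r) ≤ k) (l.getD (r - 1) 0)
    with hgdef
  set R : ℕ := Nat.findGreatest (fun r => rect S (1, r) ≤ k) l.length with hRdef
  have hRle : R ≤ l.length := Nat.findGreatest_le _
  have hR1 : ∀ r, 1 ≤ r → r ≤ R → rect S (1, r) ≤ k := by
    intro r h1 h2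
    have hpos : 0 < R := by omega
    rw [hRdef] at hpos
    obtain ⟨m, hm0, hmle, hPm⟩ := Nat.findGreatest_pos.mp hpos
    have hPR : rect S (1, R) ≤ k :=
      Nat.findGreatest_spec (P := fun r => rect S (1, r) ≤ k) hmle hPm
    rcases Nat.lt_or_ge r R with h | h
    · have mem1 : InCompDiag l (1, r) := mk_comp le_rfl (sp_pos hl (by omega)) h1 (by omega)
      have mem2 : InCompDiag l (1, R) := mk_comp le_rfl (sp_pos hl (by omega)) (by omega) hRle
      exact le_trans (le_of_lt (hTcol1 r R h mem1 mem2)) hPR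
    · rw [show r = R by omega]
      exact hPR
  have hRmax : ∀ c r, InCompDiag l (c, r) → rect S (c, r) ≤ k → r ≤ R := by
    intro c r h hle
    have h' := comp_elim h
    have hm : rect S (1, r) ≤ rect S (c, r) := hTrowle 1 c r le_rfl (by omega) h
    exact Nat.le_findGreatest (by omega) (by omega)
  have hg_le : ∀ r, g r ≤ l.getD (r - 1) 0 := fun r => Nat.findGreatest_le _
  have hg1 : ∀ r, 1 ≤ r → r ≤ R → 1 ≤ g r := by
    intro r h1 h2
    exact Nat.le_findGreatest (sp_pos hl (by omega)) (hR1 r h1 h2)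
  have hgspec : ∀ r, 1 ≤ r → r ≤ R → rect S (g r, r) ≤ k := by
    intro r h1 h2
    exact Nat.findGreatest_spec (P := fun c => rect S (c, r) ≤ k)
      (sp_pos hl (by omega)) (hR1 r h1 h2)
  have hg2 : ∀ r, 1 ≤ r → r + 1 ≤ R → 2 ≤ g r := by
    intro r h1 h2
    have hs := sp_le hl (show r - 1 ≤ r by omega) (show r < l.length by omega)
    have hp := sp_pos hl (show r < l.length by omega)
    have mem2r : InCompDiag l (2, r) := mk_comp (by omega) (by omega) h1 (by omega)
    have mem1r1 : InCompDiag l (1, r + 1) := mk_comp le_rfl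
      (by simpa using sp_pos hl (show r < l.length by omega)) (by omega) (by omega)
    have hlt : rect S (2, r) < rect S (1, r + 1) := hTdiag 1 r mem2r mem1r1
    have hk' := hR1 (r + 1) (by omega) h2
    exact Nat.le_findGreatest (by omega) (by omega)
  have hg_prefix : ∀ c r, 1 ≤ c → c ≤ g r → 1 ≤ r → r ≤ R → rect S (c, r) ≤ k := by
    intro c r hc hcg h1 h2
    have hmm : InCompDiag l (g r, r) := mk_comp (by have := hg1 r h1 h2; omega)
      (hg_le r) h1 (by omega)
    exact le_trans (hTrowle c (g r) r hc hcg hmm) (hgspec r h1 h2)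
  have hβlen : ((List.range R).map (fun i => g (i + 1))).length = R := by simp
  have hβget : ∀ i, i < R → ((List.range R).map (fun i => g (i + 1))).getD i 0 = g (i + 1) := by
    intro i hi
    rw [List.getD_eq_getElem _ _ (by simpa using hi)]
    simp
  refine ⟨(List.range R).map (fun i => g (i + 1)), ⟨?_, ?_⟩, ?_⟩
  · intro x hx
    simp only [List.mem_map, List.mem_range] at hx
    obtain ⟨i, hi, rfl⟩ := hx
    exact hg1 (i + 1) (by omega) (by omega)
  · intro i hilen
    rw [hβlen] at hilen
    rw [hβget i (by omega)]
    exact hg2 (i + 1) (by omega) (by omega)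
  · rintro ⟨c, r⟩
    constructor
    · rintro ⟨hb, hTb⟩
      have hb' := comp_elim hb
      have hrR : r ≤ R := hRmax c r hb hTb
      have hcg : c ≤ g r := Nat.le_findGreatest (by omega) hTb
      refine ⟨by omega, ?_, by omega, ?_⟩
      · show r ≤ ((List.range R).map (fun i => g (i + 1))).length
        rw [hβlen]; omega
      · show c ≤ ((List.range R).map (fun i => g (i + 1))).getD (r - 1) 0
        rw [hβget (r - 1) (by omega), show r - 1 + 1 = r by omega]
        exact hcg
    · intro hb
      have hb' := comp_elim hb
      obtain ⟨h1, h2, h3, h4⟩ := hb'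
      rw [hβlen] at h2
      rw [hβget (r - 1) (by omega), show r - 1 + 1 = r by omega] at h4
      have hcd : c ≤ l.getD (r - 1) 0 := le_trans h4 (hg_le r)
      exact ⟨mk_comp h3 hcd h1 (by omega), hg_prefix c r h3 h4 h1 h2⟩

end RectAux

/-- rect is a bijection from standard shifted tableaux of shape λ to standard peak
Young composition tableaux of shape λ. -/
theorem rect_bijection (n : ℕ) (l : List ℕ) (hl : IsStrictPartition l) (hsum : l.sum = n) :
    (∀ S, IsSShT l n S → IsSPYCT l n (rect S)) ∧
    (∀ S S', IsSShT l n S → IsSShT l n S' →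
      (∀ b, InCompDiag l b → rect S b = rect S' b) →
      (∀ b, InShiftedDiag l b → S b = S' b)) ∧
    (∀ T, IsSPYCT l n T → ∃ S, IsSShT l n S ∧ ∀ b, InCompDiag l b → rect S b = T b) := by
  refine ⟨fun S hS => part1 hl hS, ?_, fun T hT => part3 hl hT⟩
  intro S S' hS hS' hagree b hb
  obtain ⟨c, r⟩ := b
  have hb' := shift_elim hb
  have h := hagree (c - r + 1, r) (mem_comp_of_shift hb)
  have h' : S (c - r + 1 + r - 1, r) = S' (c - r + 1 + r - 1, r) := h
  rw [show c - r + 1 + r - 1 = c by omega] at h'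
  exact h'
end

section
/- Let α be a peak composition of n and T a standard Young composition tableau of shape α. Then T satisfies the condition that for every 1 ≤ k ≤ n the boxes with entries at most k form the diagram of a peak composition, if and only if the entries in the second column of T increase from bottom to top. -/
/-- For a peak composition α and a standard Young composition tableau T of shape α:
every entry-prefix of T is a peak composition diagram iff the second column of T
increases bottom to top. -/
theorem spyct_iff_second_column_increasing (n : ℕ) (α : List ℕ)
    (hα : IsPeakComposition α) (hsum : α.sum = n)
    (T : ℕ × ℕ → ℕ) (hT : IsSYCT α n T) :
    PrefixesArePeak α n T ↔
      ∀ r r', r < r' → InCompDiag α (2, r) → InCompDiag α (2, r') →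
        T (2, r) < T (2, r') := by
  obtain ⟨⟨hrange, hsurj, hinj⟩, hrow, hcol1, htriple⟩ := hT
  have hcomp : ∀ r, 1 ≤ r → r ≤ α.length → 0 < α.getD (r - 1) 0 := by
    intro r h1 h2
    rw [List.getD_eq_getElem _ _ (by omega)]
    exact hα.1 _ (List.getElem_mem _)
  have hpeak2 : ∀ r, 1 ≤ r → r < α.length → 2 ≤ α.getD (r - 1) 0 := by
    intro r h1 h2
    have := hα.2 (r - 1) (by omega)
    omega
  constructor
  · -- PrefixesArePeak → second column increasing
    intro hP r r' hrr' hd2r hd2r'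
    have hr1 : 1 ≤ r := hd2r.1
    have hr'2 : r' ≤ α.length := hd2r'.2.1
    have hd1r' : InCompDiag α (1, r') :=
      ⟨hd2r'.1, hd2r'.2.1, le_refl 1, le_trans one_le_two hd2r'.2.2.2⟩
    obtain ⟨hk1, hkn⟩ := hrange _ hd1r'
    obtain ⟨β, ⟨hβc, hβp⟩, hβiff⟩ := hP (T (1, r')) hk1 hkn
    have h1' : InCompDiag β (1, r') := (hβiff _).1 ⟨hd1r', le_refl _⟩
    have hrβ : r' ≤ β.length := h1'.2.1
    have h2β : 1 < β.getD (r - 1) 0 := by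
      have := hβp (r - 1) (by omega)
      omega
    have hd2rβ : InCompDiag β (2, r) := ⟨hr1, by omega, one_le_two, h2β⟩
    have hle : T (2, r) ≤ T (1, r') := ((hβiff (2, r)).2 hd2rβ).2
    have hne : T (2, r) ≠ T (1, r') := by
      intro h
      have := hinj _ _ hd2r hd1r' h
      simp [Prod.ext_iff] at this
    have hlt2 : T (1, r') < T (2, r') := hrow 1 2 r' one_lt_two hd1r' hd2r'
    omega
  · -- second column increasing → PrefixesArePeak
    intro h2
    -- key consequence: entries in column 2 are smaller than first-column entries above
    have hA : ∀ r r', 1 ≤ r → r < r' → r' ≤ α.length → T (2, r) < T (1, r') := by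
      intro r r' h1 hrr' hr'
      have hd2r : InCompDiag α (2, r) :=
        ⟨h1, by omega, one_le_two, hpeak2 r h1 (by omega)⟩
      have hd1r' : InCompDiag α (1, r') :=
        ⟨by omega, hr', le_refl 1, hcomp r' (by omega) hr'⟩
      have hne : T (2, r) ≠ T (1, r') := by
        intro h
        have := hinj _ _ hd2r hd1r' h
        simp [Prod.ext_iff] at this
      rcases lt_or_ge (T (1, r')) (T (2, r)) with h | h
      · obtain ⟨hd2r', hlt⟩ := htriple 1 r' r hrr' hd1r' hd2r h
        have := h2 r r' hrr' hd2r hd2r'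
        simp only [show (1:ℕ) + 1 = 2 from rfl] at hlt
        omega
      · omega
    intro k hk1 hkn
    set g : ℕ → ℕ := fun r => Nat.findGreatest (fun c => T (c, r) ≤ k) (α.getD (r - 1) 0)
      with hg
    have hgmem : ∀ r, 1 ≤ r → r ≤ α.length → 0 < g r →
        InCompDiag α (g r, r) ∧ T (g r, r) ≤ k := by
      intro r h1 h2' hpos
      obtain ⟨c, hc0, hcle, hck⟩ := Nat.findGreatest_pos.1 hpos
      exact ⟨⟨h1, h2', hpos, Nat.findGreatest_le _⟩, Nat.findGreatest_spec (P := fun c => T (c, r) ≤ k) hcle hck⟩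
    have hprefix : ∀ r c, 1 ≤ r → r ≤ α.length → 1 ≤ c → c ≤ g r →
        InCompDiag α (c, r) ∧ T (c, r) ≤ k := by
      intro r c h1 h2' hc1 hcg
      have hpos : 0 < g r := lt_of_lt_of_le hc1 hcg
      obtain ⟨hdg, hTg⟩ := hgmem r h1 h2' hpos
      have hdc : InCompDiag α (c, r) := ⟨h1, h2', hc1, le_trans hcg hdg.2.2.2⟩
      rcases eq_or_lt_of_le hcg with h | h
      · rw [h]; exact ⟨hdg, hTg⟩
      · exact ⟨hdc, le_of_lt (lt_of_lt_of_le (hrow c (g r) r h hdc hdg) hTg)⟩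
    have hgmax : ∀ r c, InCompDiag α (c, r) → T (c, r) ≤ k → c ≤ g r := by
      intro r c hd hTk
      exact Nat.le_findGreatest hd.2.2.2 hTk
    have hmono : ∀ r r', 1 ≤ r → r < r' → r' ≤ α.length → 0 < g r' → 0 < g r := by
      intro r r' h1 hrr' hr' hpos
      obtain ⟨hd1r', hT1r'⟩ := hprefix r' 1 (by omega) hr' le_rfl hpos
      have hd1r : InCompDiag α (1, r) := ⟨h1, by omega, le_rfl, hcomp r h1 (by omega)⟩
      have hlt : T (1, r) < T (1, r') := hcol1 r r' hrr' hd1r hd1r'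
      exact hgmax r 1 hd1r (by omega)
    set m := Nat.findGreatest (fun r => 0 < g r) α.length with hm
    have hmle : m ≤ α.length := Nat.findGreatest_le _
    have hgpos : ∀ r, 1 ≤ r → r ≤ m → 0 < g r := by
      intro r h1 hrm
      have hmpos : 0 < m := lt_of_lt_of_le h1 hrm
      have hgm : 0 < g m := by
        obtain ⟨r0, h0, hle0, hp0⟩ := Nat.findGreatest_pos.1 hmpos
        exact Nat.findGreatest_spec (P := fun r => 0 < g r) hle0 hp0
      rcases eq_or_lt_of_le hrm with h | h
      · rw [h]; exact hgm
      · exact hmono r m h1 h hmle hgm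
    have hmge : ∀ r, r ≤ α.length → 0 < g r → r ≤ m :=
      fun r h2' hp => Nat.le_findGreatest h2' hp
    refine ⟨(List.range m).map (fun i => g (i + 1)), ⟨?_, ?_⟩, ?_⟩
    · -- composition
      intro x hx
      simp only [List.mem_map, List.mem_range] at hx
      obtain ⟨i, him, rfl⟩ := hx
      exact hgpos (i + 1) (by omega) (by omega)
    · -- peak
      intro i hi
      simp only [List.length_map, List.length_range] at hi
      have hget : ((List.range m).map (fun i => g (i + 1))).getD i 0 = g (i + 1) := by
        rw [List.getD_eq_getElem _ _ (by simp; omega)]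
        simp
      rw [hget]
      have hr' : 0 < g (i + 2) := hgpos (i + 2) (by omega) (by omega)
      obtain ⟨hd1, hT1⟩ := hprefix (i + 2) 1 (by omega) (by omega) le_rfl hr'
      have hlt : T (2, i + 1) < T (1, i + 2) := hA (i + 1) (i + 2) (by omega) (by omega)
        (by omega)
      have hd2 : InCompDiag α (2, i + 1) :=
        ⟨by omega, by omega, one_le_two, hpeak2 (i + 1) (by omega) (by omega)⟩
      exact hgmax (i + 1) 2 hd2 (by omega)
    · -- the diagram iff
      rintro ⟨c, r⟩
      have hβlen : ((List.range m).map (fun i => g (i + 1))).length = m := by simp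
      constructor
      · rintro ⟨hd, hTk⟩
        have h1 : 1 ≤ r := hd.1
        have h2' : r ≤ α.length := hd.2.1
        have hc1 : 1 ≤ c := hd.2.2.1
        have hcg : c ≤ g r := hgmax r c hd hTk
        have hrm : r ≤ m := hmge r h2' (by omega)
        have hget : ((List.range m).map (fun i => g (i + 1))).getD (r - 1) 0 = g r := by
          rw [List.getD_eq_getElem _ _ (by simp; omega)]
          simp only [List.getElem_map, List.getElem_range]
          congr 1
          omega
        exact ⟨h1, by omega, hc1, by rw [hget]; exact hcg⟩
      · rintro ⟨h1, h2', hc1, hc4⟩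
        have hrm : r ≤ m := by omega
        have hget : ((List.range m).map (fun i => g (i + 1))).getD (r - 1) 0 = g r := by
          rw [List.getD_eq_getElem _ _ (by simp; omega)]
          simp only [List.getElem_map, List.getElem_range]
          congr 1
          omega
        rw [hget] at hc4
        exact hprefix r c h1 (le_trans hrm hmle) hc1 hc4
end

section
/- Let α be a peak composition of n and T a standard peak composition tableau of shape α. Suppose i is an ascent of T (i.e., i+1 appears later than i in the bottom-to-top, left-to-right column reading word) and i+1 is not immediately to the right of i in the same row. Then the filling s_i T obtained by exchanging entries i and i+1 is also a standard peak composition tableau of shape α. -/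
private lemma swap_aux_lt {i u v : ℕ} (h : u < v) (hne : ¬(u = i ∧ v = i + 1)) :
    (if u = i then i + 1 else if u = i + 1 then i else u)
      < (if v = i then i + 1 else if v = i + 1 then i else v) := by
  split_ifs <;> omega

private lemma swap_aux_inj {i u v : ℕ}
    (h : (if u = i then i + 1 else if u = i + 1 then i else u)
        = (if v = i then i + 1 else if v = i + 1 then i else v)) : u = v := by
  split_ifs at h <;> omega

private lemma swap_aux_le {i k u : ℕ} (hk : k ≠ i) :
    ((if u = i then i + 1 else if u = i + 1 then i else u) ≤ k) ↔ u ≤ k := by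
  split_ifs <;> omega

private lemma mem_diag_iff {α : List ℕ} {b : ℕ × ℕ} :
    InCompDiag α b ↔ 1 ≤ b.2 ∧ b.2 ≤ α.length ∧ 1 ≤ b.1 ∧ b.1 ≤ α.getD (b.2 - 1) 0 :=
  Iff.rfl

private lemma mem_diag_pair {α : List ℕ} {c r : ℕ} :
    InCompDiag α (c, r) ↔ 1 ≤ r ∧ r ≤ α.length ∧ 1 ≤ c ∧ c ≤ α.getD (r - 1) 0 :=
  Iff.rfl

private lemma getD_pos {l : List ℕ} (h : ∀ x ∈ l, 0 < x) {j : ℕ} (hj : j < l.length) :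
    0 < l.getD j 0 := by
  rw [List.getD_eq_getElem l 0 hj]; exact h _ (List.getElem_mem hj)

private lemma getD_take {l : List ℕ} {n j : ℕ} (h : j < n) :
    (l.take n).getD j 0 = l.getD j 0 := by
  rw [List.getD_eq_getElem?_getD, List.getD_eq_getElem?_getD, List.getElem?_take, if_pos h]

private lemma getD_set_self {l : List ℕ} {j a : ℕ} (h : j < l.length) :
    (l.set j a).getD j 0 = a := by
  rw [List.getD_eq_getElem?_getD, List.getElem?_set_self h]; rfl

private lemma getD_set_ne {l : List ℕ} {j k a : ℕ} (h : j ≠ k) :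
    (l.set j a).getD k 0 = l.getD k 0 := by
  rw [List.getD_eq_getElem?_getD, List.getElem?_set_ne h, List.getD_eq_getElem?_getD]

/-- If i is a nonattacking ascent of a standard peak composition tableau (i+1 later in
the column reading word and not immediately right of i), then exchanging i and i+1
yields another standard peak composition tableau. -/
theorem spct_swap_ascent (n : ℕ) (α : List ℕ) (hα : IsPeakComposition α)
    (hsum : α.sum = n) (T : ℕ × ℕ → ℕ) (hT : IsSPCT α n T) (i : ℕ)
    (b b' : ℕ × ℕ) (hb : InCompDiag α b) (hb' : InCompDiag α b')
    (hTb : T b = i) (hTb' : T b' = i + 1)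
    (hasc : b.1 < b'.1 ∨ (b.1 = b'.1 ∧ b.2 < b'.2))
    (hnotadj : ¬(b'.2 = b.2 ∧ b'.1 = b.1 + 1)) :
    IsSPCT α n (swapFill T i) := by
  obtain ⟨⟨hbd, hsurj, hinj⟩, hrow, hcol, hpeak⟩ := hT
  have hi1 : 1 ≤ i := by have := (hbd b hb).1; omega
  have hin : i + 1 ≤ n := by have := (hbd b' hb').2; omega
  have hxb : ∀ x, InCompDiag α x → T x = i → x = b := fun x hx h =>
    hinj x b hx hb (by rw [h, hTb])
  have hxb' : ∀ x, InCompDiag α x → T x = i + 1 → x = b' := fun x hx h =>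
    hinj x b' hx hb' (by rw [h, hTb'])
  -- b and b' are not in the same row
  have hrne : b.2 ≠ b'.2 := by
    intro heq
    have hlt : b.1 < b'.1 := by
      rcases hasc with h | ⟨h1, h2⟩
      · exact h
      · omega
    have hne1 : b'.1 ≠ b.1 + 1 := fun h => hnotadj ⟨heq.symm, h⟩
    have hb'2 := hb'
    simp only [mem_diag_iff] at hb'2
    rw [← heq] at hb'2
    obtain ⟨c1, c2, c3, c4⟩ := hb'2
    have hm : InCompDiag α (b.1 + 1, b.2) := by
      rw [mem_diag_pair]
      exact ⟨c1, c2, by omega, by omega⟩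
    have hr1 : i < T (b.1 + 1, b.2) := by
      have h := hrow b.1 (b.1 + 1) b.2 (by omega) hb hm
      exact lt_of_eq_of_lt hTb.symm h
    have hr2 : T (b.1 + 1, b.2) < i + 1 := by
      have h := hrow (b.1 + 1) b'.1 b.2 (by omega) hm (by rw [heq]; exact hb')
      exact lt_of_lt_of_eq h (show T (b'.1, b.2) = i + 1 by rw [heq]; exact hTb')
    omega
  -- the shape of entries ≤ i + 1
  obtain ⟨β2, h2pk, h2iff⟩ := hpeak (i + 1) (by omega) hin
  have h2comp := h2pk.1
  have h2peak := h2pk.2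
  have hbβ : InCompDiag β2 b := (h2iff b).1 ⟨hb, by omega⟩
  have hb'β : InCompDiag β2 b' := (h2iff b').1 ⟨hb', by omega⟩
  have hbβ2 := hbβ
  simp only [mem_diag_iff] at hbβ2
  obtain ⟨d1, d2, d3, d4⟩ := hbβ2
  have hb'β2 := hb'β
  simp only [mem_diag_iff] at hb'β2
  obtain ⟨e1, e2, e3, e4⟩ := hb'β2
  -- the row of b in β2 has exactly b.1 boxes
  have hF1 : β2.getD (b.2 - 1) 0 = b.1 := by
    by_contra hne
    have hnext : InCompDiag β2 (b.1 + 1, b.2) := by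
      rw [mem_diag_pair]
      exact ⟨d1, d2, by omega, by omega⟩
    obtain ⟨hαn, hTn⟩ := (h2iff _).2 hnext
    have hgt : i < T (b.1 + 1, b.2) := by
      have h := hrow b.1 (b.1 + 1) b.2 (by omega) hb hαn
      exact lt_of_eq_of_lt hTb.symm h
    have heqi : T (b.1 + 1, b.2) = i + 1 := by omega
    have hbe := hxb' _ hαn heqi
    exact hrne (by rw [← hbe])
  -- if b is in column 1, it is in the top row of β2
  have htop1 : b.1 = 1 → b.2 = β2.length := by
    intro h1
    by_contra hne
    have := h2peak (b.2 - 1) (by omega)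
    omega
  -- if b is in column 2, it is in the top row of β2
  have htop2 : b.1 = 2 → b.2 = β2.length := by
    intro h2'
    by_contra hne
    have hblt : b.2 < β2.length := by omega
    have hbu := hb
    simp only [mem_diag_iff] at hbu
    have hone : InCompDiag α (1, b.2) := by
      rw [mem_diag_pair]
      exact ⟨hbu.1, hbu.2.1, le_refl 1, by omega⟩
    have hT1 : T (1, b.2) < i := by
      have h := hrow 1 b.1 b.2 (by omega) hone hb
      exact lt_of_lt_of_eq h hTb
    have hipos : 2 ≤ i := by have := (hbd _ hone).1; omega
    have htb : InCompDiag β2 (1, b.2 + 1) := by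
      rw [mem_diag_pair]
      refine ⟨by omega, by omega, le_refl 1, ?_⟩
      rw [Nat.add_sub_cancel]; exact getD_pos h2comp hblt
    obtain ⟨hαt, hTt⟩ := (h2iff _).2 htb
    have htne : T (1, b.2 + 1) ≠ i := by
      intro h
      have he := hxb _ hαt h
      have h1 : (1 : ℕ) = b.1 := congrArg Prod.fst he
      omega
    have hb'1 : 2 ≤ b'.1 := by rcases hasc with h | ⟨h1, _⟩ <;> omega
    have htne' : T (1, b.2 + 1) ≠ i + 1 := by
      intro h
      have he := hxb' _ hαt h
      have h1 : (1 : ℕ) = b'.1 := congrArg Prod.fst he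
      omega
    obtain ⟨β0, h0pk, h0iff⟩ := hpeak (i - 1) (by omega) (by omega)
    have h0peak := h0pk.2
    have m1 : InCompDiag β0 (1, b.2) := (h0iff _).1 ⟨hone, by omega⟩
    have m2 : InCompDiag β0 (1, b.2 + 1) := (h0iff _).1 ⟨hαt, by omega⟩
    rw [mem_diag_pair] at m1 m2
    have hbeq : (2, b.2) = b := by rw [← h2']
    have m3 : ¬ InCompDiag β0 (2, b.2) := by
      intro h
      have hle := ((h0iff _).2 h).2
      have hT2 : T (2, b.2) = i := by rw [hbeq, hTb]
      omega
    have hg : β0.getD (b.2 - 1) 0 < 2 := by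
      by_contra hg
      exact m3 (by rw [mem_diag_pair]; exact ⟨m1.1, m1.2.1, by omega, by omega⟩)
    have m1' := m1.2.2.2
    have m2' := m2.2.1
    have := h0peak (b.2 - 1) (by omega)
    omega
  -- b and b' are not both in column 1
  have hcol1 : ¬(b.1 = 1 ∧ b'.1 = 1) := by
    rintro ⟨h1, h1'⟩
    have hL := htop1 h1
    have : b.2 < b'.2 := by rcases hasc with h | ⟨_, h⟩ <;> omega
    omega
  refine ⟨⟨?_, ?_, ?_⟩, ?_, ?_, ?_⟩
  · -- bounds
    intro x hx
    have := hbd x hx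
    simp only [swapFill]
    split_ifs <;> omega
  · -- surjectivity
    intro k hk1 hkn
    by_cases hk : k = i
    · refine ⟨b', hb', ?_⟩
      simp only [swapFill, hTb']
      split_ifs <;> omega
    · by_cases hk' : k = i + 1
      · refine ⟨b, hb, ?_⟩
        simp only [swapFill, hTb]
        split_ifs <;> omega
      · obtain ⟨x, hx, hTx⟩ := hsurj k hk1 hkn
        refine ⟨x, hx, ?_⟩
        simp only [swapFill, hTx]
        split_ifs <;> omega
  · -- injectivity
    intro x y hx hy h
    simp only [swapFill] at h
    exact hinj x y hx hy (swap_aux_inj h)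
  · -- rows increase
    intro c c' r hcc hxc hxc'
    simp only [swapFill]
    refine swap_aux_lt (hrow c c' r hcc hxc hxc') ?_
    rintro ⟨h1, h2⟩
    have e1' := hxb _ hxc h1
    have e2' := hxb' _ hxc' h2
    apply hrne
    rw [← e1', ← e2']
  · -- first column increases
    intro r r' hrr hxc hxc'
    simp only [swapFill]
    refine swap_aux_lt (hcol r r' hrr hxc hxc') ?_
    rintro ⟨h1, h2⟩
    have e1' := hxb _ hxc h1
    have e2' := hxb' _ hxc' h2
    refine hcol1 ⟨?_, ?_⟩
    · rw [← e1']
    · rw [← e2']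
  · -- prefixes are peak
    intro k hk1 hkn
    by_cases hk : k = i
    · subst hk
      have hchar : ∀ x, (InCompDiag α x ∧ swapFill T k x ≤ k) ↔
          (InCompDiag β2 x ∧ x ≠ b) := by
        intro x
        constructor
        · rintro ⟨hx, hle⟩
          simp only [swapFill] at hle
          split_ifs at hle with g1 g2
          · omega
          · exact ⟨(h2iff x).1 ⟨hx, by omega⟩, fun he => g1 (by rw [he, hTb])⟩
          · exact ⟨(h2iff x).1 ⟨hx, by omega⟩, fun he => g1 (by rw [he, hTb])⟩
        · rintro ⟨hx, hne⟩
          obtain ⟨hxα, hxle⟩ := (h2iff x).2 hx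
          refine ⟨hxα, ?_⟩
          have hxi : T x ≠ k := fun h => hne (hxb x hxα h)
          simp only [swapFill]
          split_ifs <;> omega
      by_cases honeb : b.1 = 1
      · -- remove the whole top row of β2
        have hL := htop1 honeb
        refine ⟨β2.take (β2.length - 1), ⟨?_, ?_⟩, ?_⟩
        · intro x hx
          exact h2comp x (List.mem_of_mem_take hx)
        · intro j hj
          rw [List.length_take] at hj
          rw [getD_take (by omega)]
          exact h2peak j (by omega)
        · intro x
          rw [hchar x]
          simp only [mem_diag_iff, List.length_take]
          constructor
          · rintro ⟨⟨f1, f2, f3, f4⟩, hne⟩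
            have hx2 : x.2 < β2.length := by
              by_contra hge
              have hx2e : x.2 = β2.length := by omega
              have f4' : x.1 ≤ b.1 := by
                rw [hx2e, ← hL, hF1] at f4
                exact f4
              exact hne (Prod.ext (by omega) (by omega))
            refine ⟨f1, by omega, f3, ?_⟩
            rw [getD_take (by omega)]
            exact f4
          · rintro ⟨f1, f2, f3, f4⟩
            rw [getD_take (by omega)] at f4
            refine ⟨⟨f1, by omega, f3, f4⟩, fun he => ?_⟩
            have hxx : x.2 = b.2 := congrArg Prod.snd he
            omega
      · -- shrink the row of b by one box
        have hb1 : 2 ≤ b.1 := by omega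
        refine ⟨β2.set (b.2 - 1) (b.1 - 1), ⟨?_, ?_⟩, ?_⟩
        · intro x hx
          rcases List.mem_or_eq_of_mem_set hx with h | h
          · exact h2comp x h
          · omega
        · intro j hj
          rw [List.length_set] at hj
          by_cases hji : j = b.2 - 1
          · subst hji
            rw [getD_set_self (by omega)]
            have hblt : b.2 < β2.length := by omega
            have h3 : b.1 ≠ 2 := fun h => by rw [htop2 h] at hblt; omega
            omega
          · rw [getD_set_ne (Ne.symm hji)]
            exact h2peak j hj
        · intro x
          rw [hchar x]
          simp only [mem_diag_iff, List.length_set]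
          by_cases hx2 : x.2 = b.2
          · have hxb_iff : x ≠ b ↔ x.1 ≠ b.1 := by
              constructor
              · intro h h1
                exact h (Prod.ext h1 hx2)
              · intro h he
                exact h (congrArg Prod.fst he)
            rw [hx2, getD_set_self (by omega), hF1, hxb_iff]
            omega
          · constructor
            · rintro ⟨⟨f1, f2, f3, f4⟩, hne⟩
              refine ⟨f1, f2, f3, ?_⟩
              rw [getD_set_ne (show b.2 - 1 ≠ x.2 - 1 by omega)]
              exact f4
            · rintro ⟨f1, f2, f3, f4⟩
              rw [getD_set_ne (show b.2 - 1 ≠ x.2 - 1 by omega)] at f4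
              exact ⟨⟨f1, f2, f3, f4⟩, fun he => hx2 (congrArg Prod.snd he)⟩
    · obtain ⟨β, hβ, hiff⟩ := hpeak k hk1 hkn
      refine ⟨β, hβ, fun x => ?_⟩
      rw [← hiff x]
      simp only [swapFill]
      constructor
      · rintro ⟨hx, hle⟩
        exact ⟨hx, (swap_aux_le hk).1 hle⟩
      · rintro ⟨hx, hle⟩
        exact ⟨hx, (swap_aux_le hk).2 hle⟩
end

section
/- Let α be a composition of n and T a standard Young composition tableau of shape α. If i and i+1 both lie in the same column c > 1 of T, then i lies in a strictly higher row than i+1. -/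
/-- If i and i+1 lie in the same column c > 1 of a standard Young composition tableau,
then i lies in a strictly higher row than i+1. -/
theorem syct_consecutive_same_column (n : ℕ) (α : List ℕ) (hα : IsComposition α)
    (hsum : α.sum = n) (T : ℕ × ℕ → ℕ) (hT : IsSYCT α n T) (i : ℕ)
    (b b' : ℕ × ℕ) (hb : InCompDiag α b) (hb' : InCompDiag α b')
    (hTb : T b = i) (hTb' : T b' = i + 1)
    (hcol : b.1 = b'.1) (hc : 1 < b.1) :
    b'.2 < b.2 := by
  obtain ⟨c, r⟩ := b
  obtain ⟨c', r'⟩ := b'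
  simp only [Prod.fst, Prod.snd] at hcol hc ⊢
  subst hcol
  by_contra h
  push_neg at h
  have hne : r ≠ r' := by
    rintro rfl
    omega
  have hr : r < r' := lt_of_le_of_ne h hne
  have hL : InCompDiag α (c - 1, r') := by
    obtain ⟨h1, h2, h3, h4⟩ := hb'
    dsimp only at h1 h2 h3 h4
    refine ⟨h1, h2, by omega, ?_⟩
    dsimp only
    omega
  have hrow := hT.2.1 (c - 1) c r' (by omega) hL hb'
  rw [hTb'] at hrow
  have hneq : T (c - 1, r') ≠ i := by
    intro he
    have := hT.1.2.2 _ _ hL hb (he.trans hTb.symm)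
    simp only [Prod.mk.injEq] at this
    omega
  have hlt : T (c - 1, r') < i := by omega
  have hc1 : c - 1 + 1 = c := by omega
  have h3 := hT.2.2.2 (c - 1) r' r hr hL (by rw [hc1]; exact hb)
      (by rw [hc1, hTb]; exact hlt)
  rw [hc1] at h3
  omega
end

section
/- Let α be a composition of n and T a standard Young composition tableau of shape α. If i is an ascent of T (i+1 lies in a column strictly right of i) and i+1 is not immediately right of i in the same row, then exchanging the entries i and i+1 yields another standard Young composition tableau of shape α. -/
/-- If i is an ascent of a standard Young composition tableau (i+1 strictly right of i)
and i+1 is not immediately right of i in the same row, then exchanging i and i+1 yields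
another standard Young composition tableau. -/
theorem syct_swap_ascent (n : ℕ) (α : List ℕ) (hα : IsComposition α)
    (hsum : α.sum = n) (T : ℕ × ℕ → ℕ) (hT : IsSYCT α n T) (i : ℕ)
    (b b' : ℕ × ℕ) (hb : InCompDiag α b) (hb' : InCompDiag α b')
    (hTb : T b = i) (hTb' : T b' = i + 1)
    (hasc : b.1 < b'.1)
    (hnotadj : ¬(b'.2 = b.2 ∧ b'.1 = b.1 + 1)) :
    IsSYCT α n (swapFill T i) := by
  obtain ⟨⟨hbound, hsurj, hinj⟩, hrow, hcol, htriple⟩ := hT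
  have hib : ∀ x, InCompDiag α x → T x = i → x = b := fun x hx h =>
    hinj x b hx hb (h.trans hTb.symm)
  have hib' : ∀ x, InCompDiag α x → T x = i + 1 → x = b' := fun x hx h =>
    hinj x b' hx hb' (h.trans hTb'.symm)
  have hb1 : 1 ≤ b.1 := hb.2.2.1
  have hi1 : 1 ≤ i := hTb ▸ (hbound b hb).1
  have hin : i + 1 ≤ n := hTb' ▸ (hbound b' hb').2
  -- b and b' are not in the same row
  have hrowne : b.2 ≠ b'.2 := by
    intro h
    rcases Nat.lt_or_ge (b.1 + 1) b'.1 with hlt | hge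
    · -- there would be a box strictly between them in the same row
      have hm : InCompDiag α (b.1 + 1, b.2) := by
        refine ⟨hb.1, hb.2.1, by omega, ?_⟩
        have h2 := hb'.2.2.2
        rw [h]
        omega
      have h1 : T (b.1, b.2) < T (b.1 + 1, b.2) := hrow b.1 (b.1 + 1) b.2 (by omega) hb hm
      have hb'' : InCompDiag α (b'.1, b.2) := by rw [h]; exact hb'
      have h2 : T (b.1 + 1, b.2) < T (b'.1, b.2) := hrow (b.1 + 1) b'.1 b.2 hlt hm hb''
      have e1 : T (b.1, b.2) = i := hTb
      have e2 : T (b'.1, b.2) = i + 1 := by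
        rw [show ((b'.1, b.2) : ℕ × ℕ) = b' by rw [h]]; exact hTb'
      omega
    · exact hnotadj ⟨h.symm, by omega⟩
  -- monotonicity of the swap
  have mono : ∀ x y, InCompDiag α x → InCompDiag α y → T x < T y →
      ¬(x = b ∧ y = b') → swapFill T i x < swapFill T i y := by
    intro x y hx hy hxy hne2
    have key : ¬(T x = i ∧ T y = i + 1) := fun ⟨h1, h2⟩ =>
      hne2 ⟨hib x hx h1, hib' y hy h2⟩
    simp only [swapFill]
    split_ifs <;> omega
  have mono' : ∀ x y, InCompDiag α x → InCompDiag α y →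
      swapFill T i x < swapFill T i y → ¬(x = b' ∧ y = b) → T x < T y := by
    intro x y hx hy hxy hne2
    have key : ¬(T x = i + 1 ∧ T y = i) := fun ⟨h1, h2⟩ =>
      hne2 ⟨hib' x hx h1, hib y hy h2⟩
    simp only [swapFill] at hxy
    split_ifs at hxy <;> omega
  refine ⟨⟨?_, ?_, ?_⟩, ?_, ?_, ?_⟩
  · -- bounds
    intro x hx
    have := hbound x hx
    simp only [swapFill]
    split_ifs <;> omega
  · -- surjectivity
    intro k hk1 hkn
    rcases eq_or_ne k i with rfl | hki
    · refine ⟨b', hb', ?_⟩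
      simp only [swapFill, hTb']
      split_ifs <;> omega
    rcases eq_or_ne k (i + 1) with rfl | hki1
    · refine ⟨b, hb, ?_⟩
      simp only [swapFill, hTb]
      split_ifs <;> omega
    · obtain ⟨x, hx, hTx⟩ := hsurj k hk1 hkn
      refine ⟨x, hx, ?_⟩
      simp only [swapFill]
      split_ifs <;> omega
  · -- injectivity
    intro x y hx hy hxy
    apply hinj x y hx hy
    simp only [swapFill] at hxy
    split_ifs at hxy <;> omega
  · -- rows increase
    intro c c' r hcc hx hy
    refine mono _ _ hx hy (hrow c c' r hcc hx hy) ?_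
    rintro ⟨h1, h2⟩
    exact hrowne (by rw [← h1, ← h2])
  · -- first column increases
    intro r r' hrr hx hy
    refine mono _ _ hx hy (hcol r r' hrr hx hy) ?_
    rintro ⟨h1, h2⟩
    rw [← h1, ← h2] at hasc
    exact absurd hasc (by simp)
  · -- triple condition
    intro c r r' hrr hx hy hlt
    have hold : T (c, r) < T (c + 1, r') := by
      refine mono' _ _ hx hy hlt ?_
      rintro ⟨h1, h2⟩
      rw [← h1, ← h2] at hasc
      simp only at hasc
      omega
    obtain ⟨hmem, hlt2⟩ := htriple c r r' hrr hx hy hold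
    refine ⟨hmem, ?_⟩
    refine mono _ _ hmem hy hlt2 ?_
    rintro ⟨h1, h2⟩
    rw [← h1, ← h2] at hasc
    simp only at hasc
    omega
end

section
/- Let α be a peak composition of n and T a standard peak Young composition tableau of shape α. Let j be the smallest entry of T not in row 1. Then j is in the leftmost box of row 2, j - 1 ≥ 2, j - 1 is a descent of T, j is not a descent of T, and j - 1 is the smallest element of Peak(Des(T)). -/
lemma comp_getD_pos {β : List ℕ} (hβ : IsComposition β) {i : ℕ} (hi : i < β.length) :
    0 < β.getD i 0 := by
  rw [List.getD_eq_getElem β 0 hi]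
  exact hβ _ (List.getElem_mem hi)

/-- For a standard peak Young composition tableau T, if j is the smallest entry not in
row 1, then j is in the leftmost box of row 2, j-1 ≥ 2, j-1 is a descent, j is not a
descent, and j-1 is the smallest element of Peak(Des(T)). -/
theorem spyct_smallest_peak (n : ℕ) (α : List ℕ) (hα : IsPeakComposition α)
    (hsum : α.sum = n) (hlen : 2 ≤ α.length)
    (T : ℕ × ℕ → ℕ) (hT : IsSPYCT α n T) (j : ℕ) (b : ℕ × ℕ)
    (hb : InCompDiag α b) (hTb : T b = j) (hrow : b.2 ≠ 1)
    (hmin : ∀ b', InCompDiag α b' → T b' < j → b'.2 = 1) :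
    b = (1, 2) ∧ 2 ≤ j - 1 ∧ IsDes α T (j - 1) ∧ ¬ IsDes α T j ∧
      (1 < j - 1 ∧ ¬ IsDes α T (j - 1 - 1)) ∧
      (∀ i, i < j - 1 → ¬(IsDes α T i ∧ 1 < i ∧ ¬ IsDes α T (i - 1))) := by
  obtain ⟨⟨⟨hbound, hsurj, hinj⟩, hrowinc, hcolinc, -⟩, hpk⟩ := hT
  obtain ⟨hb21, hb2len, hb11, hb1get⟩ := hb
  have hball : InCompDiag α b := ⟨hb21, hb2len, hb11, hb1get⟩
  have hj1 : 1 ≤ j := by have := (hbound b hball).1; omega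
  have hjn : j ≤ n := by have := (hbound b hball).2; omega
  have hb2 : 2 ≤ b.2 := by omega
  -- key : every entry m < j sits at box (m, 1)
  have key : ∀ m, m < j → 1 ≤ m → InCompDiag α (m, 1) ∧ T (m, 1) = m := by
    intro m
    induction m using Nat.strong_induction_on with
    | _ m IH =>
      intro hmj hm1
      obtain ⟨bm, hbm, hTbm⟩ := hsurj m hm1 (by omega)
      have hbm2 : bm.2 = 1 := hmin bm hbm (by omega)
      have hbmeq : bm = (bm.1, 1) := by rw [← hbm2]
      rw [hbmeq] at hbm hTbm
      obtain ⟨h1, h2, h3, h4⟩ := hbm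
      have hbmd : InCompDiag α (bm.1, 1) := ⟨h1, h2, h3, h4⟩
      rcases lt_trichotomy bm.1 m with h | h | h
      · have := (IH bm.1 h (by omega) h3).2
        omega
      · exact ⟨h ▸ hbmd, h ▸ hTbm⟩
      · have hdm : InCompDiag α (m, 1) := ⟨le_refl 1, h2, hm1, by
          have : (m, 1).1 ≤ bm.1 := by omega
          calc (m,1).1 ≤ bm.1 := this
            _ ≤ α.getD ((bm.1, 1).2 - 1) 0 := h4⟩
        have hlt : T (m, 1) < T (bm.1, 1) := hrowinc m bm.1 1 h hdm hbmd
        have hvm : T (m, 1) < m := by omega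
        obtain ⟨hdv, hTv⟩ := IH (T (m, 1)) hvm (by omega) (hbound _ hdm).1
        have heq := hinj (m, 1) (T (m, 1), 1) hdm hdv hTv.symm
        have := congrArg Prod.fst heq
        simp at this
        omega
  -- j ≠ 1
  have hne1 : j ≠ 1 := by
    intro h1
    obtain ⟨β, ⟨hβc, hβp⟩, hβ⟩ := hpk 1 le_rfl (by omega)
    obtain ⟨q1, q2, q3, q4⟩ := (hβ b).1 ⟨hball, by omega⟩
    have h11 : InCompDiag β (1, 1) := ⟨le_rfl, by omega, le_rfl, comp_getD_pos hβc (by omega)⟩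
    obtain ⟨h11α, hT11⟩ := (hβ (1, 1)).2 h11
    have hT11' : T (1, 1) = j := by have := (hbound _ h11α).1; omega
    have heq := hinj (1, 1) b h11α hball (by omega)
    exact hrow (by rw [← heq])
  -- j ≠ 2
  have hne2 : j ≠ 2 := by
    intro h2
    obtain ⟨hd1, hT1⟩ := key 1 (by omega) le_rfl
    obtain ⟨β, ⟨hβc, hβp⟩, hβ⟩ := hpk 2 (by omega) (by omega)
    obtain ⟨q1, q2, q3, q4⟩ := (hβ b).1 ⟨hball, by omega⟩
    have hβ0 : 1 < β.getD 0 0 := hβp 0 (by omega)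
    have h21 : InCompDiag β (2, 1) := ⟨le_rfl, by omega, by omega, hβ0⟩
    obtain ⟨h21α, hT21⟩ := (hβ (2, 1)).2 h21
    have hl : T (1, 1) < T (2, 1) := hrowinc 1 2 1 one_lt_two hd1 h21α
    have heq := hinj (2, 1) b h21α hball (by omega)
    exact hrow (by rw [← heq])
  have hj3 : 3 ≤ j := by omega
  -- b = (1, 2)
  have hb1 : b.1 = 1 := by
    by_contra h
    have h1b : InCompDiag α (1, b.2) := ⟨hb21, hb2len, le_rfl, by
      show 1 ≤ α.getD (b.2 - 1) 0; omega⟩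
    have hbb : InCompDiag α (b.1, b.2) := hball
    have hlt := hrowinc 1 b.1 b.2 (by omega) h1b hbb
    have hTbb : T (b.1, b.2) = j := hTb
    have := hmin (1, b.2) h1b (by omega)
    exact hrow this
  have hb22 : b.2 = 2 := by
    by_contra h
    have hd12 : InCompDiag α (1, 2) := ⟨one_le_two, hlen, le_rfl,
      comp_getD_pos hα.1 (by omega)⟩
    have hd1b : InCompDiag α (1, b.2) := ⟨hb21, hb2len, le_rfl, by
      show 1 ≤ α.getD (b.2 - 1) 0; omega⟩
    have hlt := hcolinc 2 b.2 (by omega) hd12 hd1b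
    have hT1b : T (1, b.2) = j := by rw [← hb1]; exact hTb
    have := hmin (1, 2) hd12 (by omega)
    simp at this
  have hbeq : b = (1, 2) := by
    have : b = (b.1, b.2) := rfl
    rw [this, hb1, hb22]
  have hd12 : InCompDiag α (1, 2) := by rw [← hbeq]; exact hball
  have hT12 : T (1, 2) = j := by rw [← hbeq]; exact hTb
  obtain ⟨hdj1, hTj1⟩ := key (j - 1) (by omega) (by omega)
  refine ⟨hbeq, by omega, ?_, ?_, ⟨by omega, ?_⟩, ?_⟩
  · exact ⟨(j - 1, 1), (1, 2), hdj1, hd12, hTj1, by omega, by show 1 ≤ j - 1; omega⟩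
  · rintro ⟨p, q, hp, hq, hTp, hTq, hle⟩
    have hpb : p = b := hinj p b hp hball (by omega)
    have hq1 : q.1 = 1 := by
      have hle' : q.1 ≤ 1 := by rw [hpb, hbeq] at hle; exact hle
      have : 1 ≤ q.1 := by
        obtain ⟨-, -, h, -⟩ := hq; exact h
      omega
    have hqlow : 1 ≤ q.2 := by obtain ⟨h, -, -, -⟩ := hq; exact h
    have hqe : q = (1, q.2) := by
      have : q = (q.1, q.2) := rfl
      rw [this, hq1]
    have hq2 : 3 ≤ q.2 := by
      by_contra hlt3
      have h12 : q.2 = 1 ∨ q.2 = 2 := by omega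
      rcases h12 with h | h
      · have := (key 1 (by omega) le_rfl).2
        rw [hqe, h] at hTq
        omega
      · rw [hqe, h, ← hbeq] at hTq
        omega
    obtain ⟨β, ⟨hβc, hβp⟩, hβ⟩ := hpk (j + 1) (by omega)
      (by have := (hbound q hq).2; omega)
    have hqβ := (hβ q).1 ⟨hq, by omega⟩
    have hlenβ : 3 ≤ β.length := by
      obtain ⟨-, h, -, -⟩ := hqβ; omega
    have hβ1 : 1 < β.getD 1 0 := hβp 1 (by omega)
    have h22β : InCompDiag β (2, 2) := ⟨one_le_two, by omega, one_le_two, hβ1⟩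
    obtain ⟨h22, hT22⟩ := (hβ (2, 2)).2 h22β
    have hlt2 : T (1, 2) < T (2, 2) := hrowinc 1 2 2 one_lt_two hd12 h22
    have heq := hinj (2, 2) q h22 hq (by omega)
    rw [← heq] at hq1
    simp at hq1
  · rintro ⟨p, q, hp, hq, hTp, hTq, hle⟩
    obtain ⟨hdm, hTm⟩ := key (j - 1 - 1) (by omega) (by omega)
    obtain ⟨hdm', hTm'⟩ := key (j - 1 - 1 + 1) (by omega) (by omega)
    have hpe := hinj p (j - 1 - 1, 1) hp hdm (by omega)
    have hqe := hinj q (j - 1 - 1 + 1, 1) hq hdm' (by omega)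
    rw [hpe, hqe] at hle
    have : j - 1 - 1 + 1 ≤ j - 1 - 1 := hle
    omega
  · rintro i hij ⟨⟨p, q, hp, hq, hTp, hTq, hle⟩, hi1, -⟩
    obtain ⟨hdm, hTm⟩ := key i (by omega) (by omega)
    obtain ⟨hdm', hTm'⟩ := key (i + 1) (by omega) (by omega)
    have hpe := hinj p (i, 1) hp hdm (by omega)
    have hqe := hinj q (i + 1, 1) hq hdm' (by omega)
    rw [hpe, hqe] at hle
    have : i + 1 ≤ i := hle
    omega
end
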